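/- Let n ≥ 1 and let R and R' be commutative rings with unit that are elementarily equivalent in the first-order language of rings. Then the special linear groups SL_n(R) and SL_n(R') are elementarily equivalent in the first-order language of groups. -/

import Mathlib

open FirstOrder

/-- The function symbols of the first-order language of groups:
multiplication, inverse, and identity. -/
inductive GroupFunc : ℕ → Type
  | mul : GroupFunc 2
  | inv : GroupFunc 1
  | one : GroupFunc 0

/-- The first-order language of groups. -/
def groupLang : FirstOrder.Language :=
  { Functions := GroupFunc, Relations := fun _ => Empty }

/-- Any group is a structure for the language of groups in the natural way. -/
instance groupLangStructure (G : Type*) [Group G] : groupLang.Structure G where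
  funMap {_} f v :=
    match f with
    | GroupFunc.mul => v 0 * v 1
    | GroupFunc.inv => (v 0)⁻¹
    | GroupFunc.one => 1
  RelMap {_} r := r.elim

open Language Matrix

/-- Matrix of free-comm-ring elements attached to a group term. -/
noncomputable def termMat (n k : ℕ) :
    groupLang.Term (Empty ⊕ Fin k) →
    Matrix (Fin n) (Fin n) (FreeCommRing (Fin k × Fin n × Fin n))
  | .var (Sum.inl e) => e.elim
  | .var (Sum.inr i) => Matrix.of fun a b => FreeCommRing.of (i, a, b)
  | .func GroupFunc.mul ts => termMat n k (ts 0) * termMat n k (ts 1)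
  | .func GroupFunc.inv ts => (termMat n k (ts 0)).adjugate
  | .func GroupFunc.one _ => 1

attribute [local instance] FirstOrder.Ring.compatibleRingOfRing

theorem termMat_spec (n : ℕ) {S : Type} [CommRing S] {k : ℕ}
    (t : groupLang.Term (Empty ⊕ Fin k)) (v : Fin k → SpecialLinearGroup (Fin n) S) :
    (termMat n k t).map (FreeCommRing.lift fun p => ((v p.1 : Matrix (Fin n) (Fin n) S) p.2.1 p.2.2))
      = ↑(t.realize (Sum.elim Empty.elim v)) := by
  induction t with
  | var a =>
    rcases a with e | i
    · exact e.elim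
    · ext a b; simp [termMat, Term.realize, FreeCommRing.lift_of]
  | func f ts ih =>
    cases f
    case mul =>
      have h0 : (Term.func (GroupFunc.mul : groupLang.Functions 2) ts).realize
            (Sum.elim Empty.elim v)
          = (ts 0).realize (Sum.elim Empty.elim v) * (ts 1).realize (Sum.elim Empty.elim v) := rfl
      rw [h0]
      exact (Matrix.map_mul (L := termMat n k (ts 0)) (M := termMat n k (ts 1))).trans
        (by rw [ih 0, ih 1]; rfl)
    case inv =>
      have h0 : (Term.func (GroupFunc.inv : groupLang.Functions 1) ts).realize
            (Sum.elim Empty.elim v)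
          = ((ts 0).realize (Sum.elim Empty.elim v))⁻¹ := rfl
      rw [h0]
      exact (RingHom.map_adjugate
        (FreeCommRing.lift fun p : Fin k × Fin n × Fin n =>
          ((v p.1 : Matrix (Fin n) (Fin n) S) p.2.1 p.2.2)) (termMat n k (ts 0))).trans
        (by rw [RingHom.mapMatrix_apply, ih 0]; rfl)
    case one =>
      have h0 : (Term.func (GroupFunc.one : groupLang.Functions 0) ts).realize
            (Sum.elim Empty.elim v) = 1 := rfl
      rw [h0]
      exact Matrix.map_one _ (map_zero _) (map_one _)

/-- Ring formula saying that two matrices of polynomials are equal entrywise. -/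
noncomputable def matEqFormula {n k : ℕ}
    (A B : Matrix (Fin n) (Fin n) (FreeCommRing (Fin k × Fin n × Fin n))) :
    Language.ring.Formula (Fin k × Fin n × Fin n) :=
  ((List.finRange n ×ˢ List.finRange n).map fun ab =>
    Term.equal (FirstOrder.Ring.termOfFreeCommRing (A ab.1 ab.2))
      (FirstOrder.Ring.termOfFreeCommRing (B ab.1 ab.2))).foldr (· ⊓ ·) ⊤

theorem realize_matEqFormula {n k : ℕ} {S : Type} [CommRing S]
    (A B : Matrix (Fin n) (Fin n) (FreeCommRing (Fin k × Fin n × Fin n)))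
    (w : Fin k × Fin n × Fin n → S) :
    (matEqFormula A B).Realize w ↔
      A.map (FreeCommRing.lift w) = B.map (FreeCommRing.lift w) := by
  rw [matEqFormula, Formula.Realize, BoundedFormula.realize_foldr_inf]
  rw [List.forall_mem_map]
  constructor
  · intro h
    ext a b
    have h2 := h (a, b) (List.pair_mem_product.2 ⟨List.mem_finRange a, List.mem_finRange b⟩)
    have h3 := (Formula.realize_equal
      (t₁ := FirstOrder.Ring.termOfFreeCommRing (A a b))
      (t₂ := FirstOrder.Ring.termOfFreeCommRing (B a b)) (x := w)).1 h2
    simpa using h3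
  · intro h ab _
    refine (Formula.realize_equal
      (t₁ := FirstOrder.Ring.termOfFreeCommRing (A ab.1 ab.2))
      (t₂ := FirstOrder.Ring.termOfFreeCommRing (B ab.1 ab.2)) (x := w)).2 ?_
    simp only [FirstOrder.Ring.realize_termOfFreeCommRing]
    have := congrFun (congrFun h ab.1) ab.2
    simpa [Matrix.map_apply] using this

/-- Ring formula saying that the last matrix variable has determinant one. -/
noncomputable def detFormula (n k : ℕ) : Language.ring.Formula (Fin (k + 1) × Fin n × Fin n) :=
  Term.equal (FirstOrder.Ring.termOfFreeCommRing
    (Matrix.det (Matrix.of fun a b => FreeCommRing.of (Fin.last k, a, b)))) 1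

theorem realize_detFormula {n k : ℕ} {S : Type} [CommRing S]
    (w : Fin (k + 1) × Fin n × Fin n → S) :
    (detFormula n k).Realize w ↔
      (Matrix.of fun a b => w (Fin.last k, a, b)).det = 1 := by
  have h1 : FreeCommRing.lift w
      (Matrix.det (Matrix.of fun a b => FreeCommRing.of (Fin.last k, a, b)))
      = (Matrix.of fun a b => w (Fin.last k, a, b)).det := by
    rw [RingHom.map_det]
    congr 1
    ext a b
    simp [FreeCommRing.lift_of]
  rw [detFormula, Formula.realize_equal]
  simp [h1, FirstOrder.Ring.realize_one]

/-- The variable renaming used for quantifiers. -/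
def varMap (n k : ℕ) : Fin (k + 1) × Fin n × Fin n → (Fin k × Fin n × Fin n) ⊕ (Fin n × Fin n) :=
  fun p => Fin.lastCases (Sum.inr p.2) (fun i => Sum.inl (i, p.2)) p.1

/-- Translation of group-language formulas about `SL_n` into ring-language formulas. -/
noncomputable def gTrans (n : ℕ) : ∀ {k : ℕ}, groupLang.BoundedFormula Empty k →
    Language.ring.Formula (Fin k × Fin n × Fin n)
  | _, .falsum => ⊥
  | k, .equal t₁ t₂ => matEqFormula (termMat n k t₁) (termMat n k t₂)
  | _, .rel R _ => Empty.elim R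
  | _, .imp φ ψ => (gTrans n φ).imp (gTrans n ψ)
  | k, .all φ => Formula.iAlls (Fin n × Fin n) (((detFormula n k).imp (gTrans n φ)).relabel (varMap n k))

theorem snoc_entry_eq (n k : ℕ) {S : Type} [CommRing S]
    (v : Fin k → Matrix.SpecialLinearGroup (Fin n) S) (x : Matrix.SpecialLinearGroup (Fin n) S) :
    (fun p : Fin (k + 1) × Fin n × Fin n =>
        ((Fin.snoc (α := fun _ => Matrix.SpecialLinearGroup (Fin n) S) v x p.1 :
          Matrix (Fin n) (Fin n) S) p.2.1 p.2.2))
      = fun p => Sum.elim (fun q : Fin k × Fin n × Fin n =>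
          ((v q.1 : Matrix (Fin n) (Fin n) S) q.2.1 q.2.2))
          (fun q : Fin n × Fin n => (x : Matrix (Fin n) (Fin n) S) q.1 q.2) (varMap n k p) := by
  funext p
  obtain ⟨i, a, b⟩ := p
  refine Fin.lastCases ?_ (fun j => ?_) i
  · simp [varMap, Fin.snoc_last]
  · simp [varMap, Fin.snoc_castSucc]

theorem gTrans_spec (n : ℕ) {S : Type} [CommRing S] : ∀ {k : ℕ}
    (φ : groupLang.BoundedFormula Empty k) (v : Fin k → SpecialLinearGroup (Fin n) S),
    φ.Realize Empty.elim v ↔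
      (gTrans n φ).Realize fun p => ((v p.1 : Matrix (Fin n) (Fin n) S) p.2.1 p.2.2) := by
  intro k φ
  induction φ with
  | falsum =>
    intro v
    simp only [gTrans]
    exact iff_of_false (fun h => h) (by simp)
  | equal t₁ t₂ =>
    intro v
    rw [gTrans, realize_matEqFormula, termMat_spec, termMat_spec]
    exact ⟨fun h => congrArg _ h, fun h => Subtype.coe_injective h⟩
  | rel R ts => exact Empty.elim R
  | imp φ ψ ih₁ ih₂ =>
    intro v
    rw [gTrans, BoundedFormula.realize_imp, Formula.realize_imp, ih₁ v, ih₂ v]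
  | all φ ih =>
    intro v
    rw [gTrans, BoundedFormula.realize_all, Formula.realize_iAlls]; simp only [Formula.realize_relabel, Function.comp_def]
    constructor
    · intro H g
      rw [Formula.realize_imp, realize_detFormula]
      intro hdet
      simp only [varMap, Fin.lastCases_last, Sum.elim_inr] at hdet
      set x : Matrix.SpecialLinearGroup (Fin n) S := ⟨Matrix.of fun a b => g (a, b), hdet⟩ with hx
      have h2 := (ih (Fin.snoc v x)).1 (H x)
      rw [snoc_entry_eq n _ v x] at h2
      exact h2
    · intro H x
      have h2 := H (fun q : Fin n × Fin n => (x : Matrix (Fin n) (Fin n) S) q.1 q.2)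
      rw [Formula.realize_imp, realize_detFormula] at h2
      have h3 := h2 (by
        simp only [varMap, Fin.lastCases_last, Sum.elim_inr]
        exact x.2)
      refine (ih (Fin.snoc v x)).2 ?_
      rw [snoc_entry_eq n _ v x]
      exact h3

/-- The ring sentence translating a group sentence about `SL_n`. -/
noncomputable def gTransSentence (n : ℕ) (φ : groupLang.Sentence) : Language.ring.Sentence :=
  (gTrans n (k := 0) φ).relabel (fun p : Fin 0 × Fin n × Fin n => Fin.elim0 p.1)

theorem realize_gTransSentence (n : ℕ) {S : Type} [CommRing S] (φ : groupLang.Sentence) :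
    (Matrix.SpecialLinearGroup (Fin n) S) ⊨ φ ↔ S ⊨ gTransSentence n φ := by
  haveI i1 : Subsingleton (Fin 0 → Matrix.SpecialLinearGroup (Fin n) S) :=
    ⟨fun a b => funext fun i => i.elim0⟩
  haveI i2 : Subsingleton (Empty → Matrix.SpecialLinearGroup (Fin n) S) :=
    ⟨fun a b => funext fun e => e.elim⟩
  have h2 := gTrans_spec n (S := S) φ (fun i : Fin 0 => i.elim0)
  have hL : ((Matrix.SpecialLinearGroup (Fin n) S) ⊨ φ) ↔
      BoundedFormula.Realize φ (Empty.elim : Empty → Matrix.SpecialLinearGroup (Fin n) S)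
        (fun i : Fin 0 => i.elim0) := by
    unfold Sentence.Realize Formula.Realize
    exact iff_of_eq (congrArg₂ (fun a b => BoundedFormula.Realize φ a b)
      (Subsingleton.elim _ _) (Subsingleton.elim _ _))
  have hR : (S ⊨ gTransSentence n φ) ↔
      Formula.Realize (gTrans n (k := 0) φ)
        (fun p : Fin 0 × Fin n × Fin n =>
          ((((fun i : Fin 0 => i.elim0) p.1 : Matrix.SpecialLinearGroup (Fin n) S) :
            Matrix (Fin n) (Fin n) S) p.2.1 p.2.2)) := by
    unfold Sentence.Realize gTransSentence
    rw [Formula.realize_relabel]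
    exact iff_of_eq (congrArg _ (funext fun p : Fin 0 × Fin n × Fin n => Fin.elim0 p.1))
  exact hL.trans (h2.trans hR.symm)

/-- Two groups are elementarily equivalent in the first-order language of groups
if they satisfy exactly the same first-order sentences of the group language. -/
def GroupElemEquiv (G H : Type*) [Group G] [Group H] : Prop :=
  groupLang.ElementarilyEquivalent G H

/-- Two rings are elementarily equivalent in the first-order language of rings
if they satisfy exactly the same first-order sentences of the ring language. -/
def RingElemEquiv (R S : Type*) [Ring R] [Ring S] : Prop :=
  letI := FirstOrder.Ring.compatibleRingOfRing R
  letI := FirstOrder.Ring.compatibleRingOfRing S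
  FirstOrder.Language.ring.ElementarilyEquivalent R S

/-- If `R` and `R'` are commutative rings with unit that are elementarily equivalent in the
first-order language of rings, then for every `n ≥ 1` the special linear groups `SL_n(R)` and
`SL_n(R')` are elementarily equivalent in the first-order language of groups. -/
theorem specialLinearGroup_elementarilyEquivalent_of_ringElemEquiv
    (n : ℕ) (hn : 1 ≤ n) (R R' : Type) [CommRing R] [CommRing R']
    (h : RingElemEquiv R R') :
    GroupElemEquiv (Matrix.SpecialLinearGroup (Fin n) R)
      (Matrix.SpecialLinearGroup (Fin n) R') := by
  refine Language.elementarilyEquivalent_iff.2 fun φ => ?_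
  rw [realize_gTransSentence n φ, realize_gTransSentence n φ]
  exact Language.elementarilyEquivalent_iff.1 h (gTransSentence n φ)
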